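/- Fix real constants E, K, n', σ'_f, ε'_f > 0, b, c < 0, and Lamé constants λ, μ > 0. For a real 3×3 matrix M define the stress σ(M) = λ·(tr M)·I + μ·(M + Mᵀ), and for a real 3×3 matrix A define its trace-free part A' = A − (tr A/3)·I and the von Mises stress σ_v(A) = √((3/2)·tr(A'·A')). Let φ : (0,∞) → (0,∞) be as in Lemma 3.1 and let g : ℝ → ℝ be g(s) = 1/φ(s) for s > 0, g(s) = 0 for s ≤ 0. Then the map from the space of real 3×3 matrices to ℝ given by M ↦ g(σ_v(σ(M))) — i.e. M ↦ 1/N_det(M) with the convention 1/∞ = 0 — is continuous. -/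

import Mathlib

open Filter Set Matrix

/-- The linear elastic stress tensor `σ(M) = λ (tr M) I + μ (M + Mᵀ)`. -/
noncomputable def stressTensor (lam μ : ℝ) (M : Matrix (Fin 3) (Fin 3) ℝ) :
    Matrix (Fin 3) (Fin 3) ℝ :=
  (lam * Matrix.trace M) • (1 : Matrix (Fin 3) (Fin 3) ℝ) + μ • (M + Mᵀ)

/-- The trace-free part `A' = A − (tr A / 3) I`. -/
noncomputable def traceFreePart (A : Matrix (Fin 3) (Fin 3) ℝ) :
    Matrix (Fin 3) (Fin 3) ℝ :=
  A - (Matrix.trace A / 3) • (1 : Matrix (Fin 3) (Fin 3) ℝ)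

/-- The von Mises stress `σ_v(A) = √((3/2) tr(A' A'))`. -/
noncomputable def vonMises (A : Matrix (Fin 3) (Fin 3) ℝ) : ℝ :=
  Real.sqrt ((3 / 2) * Matrix.trace (traceFreePart A * traceFreePart A))

theorem stmt7 (E K n' σf εf b c lam μ : ℝ) (hE : 0 < E) (hK : 0 < K) (hn : 0 < n')
    (hσf : 0 < σf) (hεf : 0 < εf) (hb : b < 0) (hc : c < 0) (hlam : 0 < lam) (hμ : 0 < μ)
    (RO CMB SD φ : ℝ → ℝ)
    (hRO : ∀ σ : ℝ, RO σ = σ / E + (σ / K) ^ (1 / n'))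
    (hCMB : ∀ N : ℝ, CMB N = σf / E * (2 * N) ^ b + εf * (2 * N) ^ c)
    (hSD : ∀ s : ℝ, 0 < s →
      0 < SD s ∧ (SD s) ^ 2 / E + SD s * (SD s / K) ^ (1 / n') = s ^ 2 / E)
    (hφ : ∀ σ : ℝ, 0 < σ → 0 < φ σ ∧ CMB (φ σ) = RO (SD σ))
    (g : ℝ → ℝ) (hg : ∀ s : ℝ, g s = if 0 < s then 1 / φ s else 0) :
    Continuous (fun M : Matrix (Fin 3) (Fin 3) ℝ => g (vonMises (stressTensor lam μ M))) := by
  have hn' : 0 < 1 / n' := by positivity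
  -- the auxiliary strictly monotone function defining SD implicitly
  set F : ℝ → ℝ := fun t => t ^ 2 / E + t * (t / K) ^ (1 / n') with hFdef
  have hFmono : StrictMonoOn F (Set.Ici 0) := by
    intro x hx y hy hxy
    simp only [hFdef, Set.mem_Ici] at *
    have h1 : x ^ 2 < y ^ 2 := by nlinarith
    have h1' : x ^ 2 / E < y ^ 2 / E := by gcongr
    have h2 : (x / K) ^ (1 / n') ≤ (y / K) ^ (1 / n') :=
      Real.rpow_le_rpow (by positivity) (by gcongr) hn'.le
    have h3 : (0:ℝ) ≤ (x / K) ^ (1 / n') := Real.rpow_nonneg (by positivity) _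
    have h4 : x * (x / K) ^ (1 / n') ≤ y * (y / K) ^ (1 / n') :=
      mul_le_mul hxy.le h2 h3 (by linarith)
    linarith
  have hSDpos : ∀ s : ℝ, 0 < s → 0 < SD s := fun s hs => (hSD s hs).1
  have hSDeq : ∀ s : ℝ, 0 < s → F (SD s) = s ^ 2 / E := fun s hs => (hSD s hs).2
  -- RO is monotone on [0, ∞), RO 0 = 0
  have hROmono : MonotoneOn RO (Set.Ici 0) := by
    intro x hx y hy hxy
    rw [hRO, hRO]
    simp only [Set.mem_Ici] at hx hy
    have h2 : (x / K) ^ (1 / n') ≤ (y / K) ^ (1 / n') :=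
      Real.rpow_le_rpow (by positivity) (by gcongr) hn'.le
    have : x / E ≤ y / E := by gcongr
    linarith
  have hRO0 : RO 0 = 0 := by
    rw [hRO, zero_div, zero_div, Real.zero_rpow (ne_of_gt hn'), add_zero]
  -- CMB is strictly antitone and positive on (0, ∞)
  have hCMBanti : StrictAntiOn CMB (Set.Ioi 0) := by
    intro x hx y hy hxy
    simp only [Set.mem_Ioi] at hx hy
    rw [hCMB, hCMB]
    have h1 : (2 * y) ^ b < (2 * x) ^ b :=
      Real.rpow_lt_rpow_of_neg (by linarith) (by linarith) hb
    have h2 : (2 * y) ^ c < (2 * x) ^ c :=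
      Real.rpow_lt_rpow_of_neg (by linarith) (by linarith) hc
    have hσE : 0 < σf / E := by positivity
    nlinarith
  have hCMBpos : ∀ N : ℝ, 0 < N → 0 < CMB N := by
    intro N hN
    rw [hCMB]
    have h1 : (0:ℝ) < (2 * N) ^ b := Real.rpow_pos_of_pos (by linarith) _
    have h2 : (0:ℝ) < (2 * N) ^ c := Real.rpow_pos_of_pos (by linarith) _
    positivity
  -- φ is antitone on (0, ∞)
  have hφanti : ∀ s₁ s₂ : ℝ, 0 < s₁ → s₁ ≤ s₂ → φ s₂ ≤ φ s₁ := by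
    intro s₁ s₂ h1 h12
    have h2 : 0 < s₂ := lt_of_lt_of_le h1 h12
    have hSD12 : SD s₁ ≤ SD s₂ := by
      have hmem1 : SD s₁ ∈ Set.Ici (0:ℝ) := Set.mem_Ici.mpr (hSDpos _ h1).le
      have hmem2 : SD s₂ ∈ Set.Ici (0:ℝ) := Set.mem_Ici.mpr (hSDpos _ h2).le
      refine (hFmono.le_iff_le hmem1 hmem2).mp ?_
      rw [hSDeq _ h1, hSDeq _ h2]
      have : s₁ ^ 2 ≤ s₂ ^ 2 := by nlinarith
      gcongr
    have hC : CMB (φ s₁) ≤ CMB (φ s₂) := by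
      rw [(hφ s₁ h1).2, (hφ s₂ h2).2]
      exact hROmono (Set.mem_Ici.mpr (hSDpos _ h1).le) (Set.mem_Ici.mpr (hSDpos _ h2).le) hSD12
    by_contra hcon
    push_neg at hcon
    exact absurd hC (not_le.mpr
      (hCMBanti (Set.mem_Ioi.mpr (hφ s₁ h1).1) (Set.mem_Ioi.mpr (hφ s₂ h2).1) hcon))
  -- g is monotone
  have hgmono : Monotone g := by
    intro x y hxy
    rw [hg, hg]
    by_cases hx : 0 < x
    · have hy : 0 < y := lt_of_lt_of_le hx hxy
      rw [if_pos hx, if_pos hy]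
      exact one_div_le_one_div_of_le (hφ y hy).1 (hφanti x y hx hxy)
    · rw [if_neg hx]
      by_cases hy : 0 < y
      · rw [if_pos hy]
        exact le_of_lt (one_div_pos.mpr (hφ y hy).1)
      · rw [if_neg hy]
  -- every positive value is attained by g
  have hsurj : ∀ y : ℝ, 0 < y → ∃ s : ℝ, 0 < s ∧ φ s = 1 / y := by
    intro y hy
    have hN : (0:ℝ) < 1 / y := by positivity
    have hCN : 0 < CMB (1 / y) := hCMBpos _ hN
    -- find t > 0 with RO t = CMB (1/y), by the intermediate value theorem
    have hROcont : Continuous RO := by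
      have : Continuous fun t : ℝ => t / E + (t / K) ^ (1 / n') := by
        apply Continuous.add (by fun_prop)
        exact (Real.continuous_rpow_const hn'.le).comp (by fun_prop)
      have heq : RO = fun t : ℝ => t / E + (t / K) ^ (1 / n') := funext hRO
      rw [heq]; exact this
    obtain ⟨t, ht, hROt⟩ : ∃ t ∈ Set.Icc (0:ℝ) (E * CMB (1 / y)), RO t = CMB (1 / y) := by
      apply intermediate_value_Icc (by positivity) hROcont.continuousOn
      constructor
      · rw [hRO0]; exact hCN.le
      · rw [hRO]
        have h3 : (0:ℝ) ≤ (E * CMB (1 / y) / K) ^ (1 / n') :=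
          Real.rpow_nonneg (by positivity) _
        have h4 : E * CMB (1 / y) / E = CMB (1 / y) := by
          field_simp
        linarith
    have htpos : 0 < t := by
      rcases lt_or_eq_of_le ht.1 with h | h
      · exact h
      · exfalso; rw [← h, hRO0] at hROt; rw [← hROt] at hCN; exact lt_irrefl _ hCN
    -- take s with SD s = t
    have hFt : 0 < F t := by
      have h1 : (0:ℝ) < (t / K) ^ (1 / n') := Real.rpow_pos_of_pos (by positivity) _
      simp only [hFdef]
      positivity
    set s : ℝ := Real.sqrt (E * F t) with hsdef
    have hs : 0 < s := Real.sqrt_pos.mpr (by positivity)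
    have hFSD : F (SD s) = F t := by
      rw [hSDeq _ hs, hsdef, Real.sq_sqrt (by positivity)]
      field_simp
    have hSDst : SD s = t :=
      hFmono.injOn (Set.mem_Ici.mpr (hSDpos _ hs).le) (Set.mem_Ici.mpr htpos.le) hFSD
    refine ⟨s, hs, ?_⟩
    have hCMBeq : CMB (φ s) = CMB (1 / y) := by
      rw [(hφ s hs).2, hSDst, hROt]
    exact hCMBanti.injOn (Set.mem_Ioi.mpr (hφ s hs).1) (Set.mem_Ioi.mpr hN) hCMBeq
  -- the shifted function G is monotone and surjective, hence continuous; so is g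
  have hgcont : Continuous g := by
    set G : ℝ → ℝ := fun x => g x + min x 0 with hGdef
    have hGmono : Monotone G :=
      hgmono.add (monotone_id.min monotone_const)
    have hGsurj : Function.Surjective G := by
      intro y
      rcases le_or_gt y 0 with hy | hy
      · refine ⟨y, ?_⟩
        simp only [hGdef, hg y, if_neg (not_lt.mpr hy), min_eq_left hy, zero_add]
      · obtain ⟨s, hs, hφs⟩ := hsurj y hy
        refine ⟨s, ?_⟩
        simp only [hGdef, hg s, if_pos hs, hφs, min_eq_right hs.le, add_zero,
          one_div_one_div]
    have hGcont : Continuous G := hGmono.continuous_of_surjective hGsurj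
    have : g = fun x => G x - min x 0 := by
      ext x; simp [hGdef]
    rw [this]
    exact hGcont.sub (continuous_id.min continuous_const)
  -- continuity of the matrix part
  have hstress : Continuous fun M : Matrix (Fin 3) (Fin 3) ℝ => stressTensor lam μ M := by
    unfold stressTensor
    exact ((continuous_const.mul (continuous_id.matrix_trace)).smul continuous_const).add
      (Continuous.smul (f := fun _ => μ) (g := fun M : Matrix (Fin 3) (Fin 3) ℝ => M + Mᵀ)
        continuous_const (continuous_id.add continuous_id.matrix_transpose))
  have htf : Continuous fun M : Matrix (Fin 3) (Fin 3) ℝ =>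
      traceFreePart (stressTensor lam μ M) := by
    unfold traceFreePart
    exact hstress.sub ((hstress.matrix_trace.div_const 3).smul continuous_const)
  have hcont : Continuous fun M : Matrix (Fin 3) (Fin 3) ℝ =>
      vonMises (stressTensor lam μ M) := by
    unfold vonMises
    exact Real.continuous_sqrt.comp (continuous_const.mul (htf.matrix_mul htf).matrix_trace)
  exact hgcont.comp hcont
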